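/- arXiv:1703.08616 — 5 statements merged into one kernel-verified Lean document; each statement's English description precedes it below -/
import Mathlib

section
/- If (a,b,c,d) is a root quadruple of a Descartes packing (a ≤ 0 ≤ b ≤ c ≤ d, a+b+c ≥ d, and (a+b+c+d)^2 = 2(a^2+b^2+c^2+d^2)) with b > 0, then S_2^perp applied to it, giving (2b+a, -b, 2b+c, 2b+d), is again a root quadruple after reordering: -b ≤ 0 ≤ 2b+a ≤ 2b+c ≤ 2b+d and (-b) + (2b+a) + (2b+c) ≥ 2b+d. -/
theorem invert_root_quadruple_is_root (a b c d : ℤ)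
    (hDesc : (a + b + c + d) ^ 2 = 2 * (a ^ 2 + b ^ 2 + c ^ 2 + d ^ 2))
    (ha : a ≤ 0) (hb : 0 ≤ b) (hbc : b ≤ c) (hcd : c ≤ d)
    (hroot : d ≤ a + b + c) (hbpos : 0 < b) :
    -b ≤ 0 ∧ 0 ≤ 2 * b + a ∧ 2 * b + a ≤ 2 * b + c ∧ 2 * b + c ≤ 2 * b + d ∧
      2 * b + d ≤ (-b) + (2 * b + a) + (2 * b + c) := by
  refine ⟨by linarith, ?_, by nlinarith, by linarith, by linarith⟩
  nlinarith [sq_nonneg (a+b), sq_nonneg (c-d), sq_nonneg (b+c-d), sq_nonneg (a+b+c-d), mul_pos hbpos hbpos]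
end

section
/- The 'reflective' Euclidean algorithm on integer pairs terminates: the dynamical system on Z^2 sending (p,q) to (-p,q) if p/q < 0, to (p, 2p-q) if 0 < p/q < 1, and to (2q-p, q) if p/q > 1, halting when p = q or p = 0 or q = 0, terminates in finitely many steps on any integer pair, and when it halts starting from (p,q) ≠ (0,0), the nonzero entries equal ±gcd(p,q). -/
/-- One step of the "reflective" Euclidean algorithm: `(p,q) ↦ (-p,q)` if `p/q < 0`,
`(p,q) ↦ (p, 2p-q)` if `0 < p/q < 1`, `(p,q) ↦ (2q-p, q)` if `p/q > 1`;
halt when `p = q` or `p = 0` or `q = 0`. -/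
def stepCF (pq : ℤ × ℤ) : ℤ × ℤ :=
  if pq.1 = pq.2 ∨ pq.1 = 0 ∨ pq.2 = 0 then pq
  else if (pq.1 : ℚ) / pq.2 < 0 then (-pq.1, pq.2)
  else if (pq.1 : ℚ) / pq.2 < 1 then (pq.1, 2 * pq.1 - pq.2)
  else (2 * pq.2 - pq.1, pq.2)

lemma div_neg_iff_int (p q : ℤ) : ((p:ℚ)/q < 0) ↔ p * q < 0 := by
  rw [div_neg_iff, mul_neg_iff]
  simp only [Int.cast_pos, Int.cast_lt_zero]

lemma div_lt_one_iff_int {p q : ℤ} (h : 0 < p * q) : ((p:ℚ)/q < 1) ↔ p.natAbs < q.natAbs := by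
  have hsgn := mul_pos_iff.mp h
  rw [div_lt_one_iff]
  simp only [Int.cast_pos, Int.cast_lt, Int.cast_eq_zero, Int.cast_lt_zero]
  omega

lemma int_gcd_shift (m n k : ℤ) : Int.gcd m (n + k * m) = Int.gcd m n := by
  apply Nat.dvd_antisymm
  · have h1 : (↑(Int.gcd m (n + k * m)) : ℤ) ∣ m := Int.gcd_dvd_left _ _
    have h2 : (↑(Int.gcd m (n + k * m)) : ℤ) ∣ n + k * m := Int.gcd_dvd_right _ _
    have h3 : (↑(Int.gcd m (n + k * m)) : ℤ) ∣ n := by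
      have := h2.sub (h1.mul_left k)
      simpa using this
    exact Int.natCast_dvd_natCast.mp (Int.dvd_coe_gcd h1 h3)
  · have h1 : (↑(Int.gcd m n) : ℤ) ∣ m := Int.gcd_dvd_left _ _
    have h2 : (↑(Int.gcd m n) : ℤ) ∣ n := Int.gcd_dvd_right _ _
    have h3 : (↑(Int.gcd m n) : ℤ) ∣ n + k * m := h2.add (h1.mul_left k)
    exact Int.natCast_dvd_natCast.mp (Int.dvd_coe_gcd h1 h3)

def measCF (pq : ℤ × ℤ) : ℕ :=
  2 * (pq.1.natAbs + pq.2.natAbs) + if pq.1 * pq.2 < 0 then 1 else 0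

lemma key : ∀ (m : ℕ) (p q : ℤ), measCF (p, q) ≤ m →
    ∃ n : ℕ,
      ((stepCF^[n] (p, q)).1 = (stepCF^[n] (p, q)).2 ∨
        (stepCF^[n] (p, q)).1 = 0 ∨ (stepCF^[n] (p, q)).2 = 0) ∧
      Int.gcd (stepCF^[n] (p, q)).1 (stepCF^[n] (p, q)).2 = Int.gcd p q := by
  intro m
  induction m with
  | zero =>
    intro p q hm
    refine ⟨0, ?_, rfl⟩
    simp only [measCF] at hm
    left
    simp only [Function.iterate_zero, id]
    omega
  | succ m ih =>
    intro p q hm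
    by_cases hh : p = q ∨ p = 0 ∨ q = 0
    · exact ⟨0, hh, rfl⟩
    push_neg at hh
    obtain ⟨hpq, hp, hq⟩ := hh
    have hstep : stepCF (p, q) =
        if (p:ℚ)/q < 0 then (-p, q)
        else if (p:ℚ)/q < 1 then (p, 2*p - q)
        else (2*q - p, q) := by
      simp only [stepCF, hpq, hp, hq, or_false, if_false]
    by_cases hneg : p * q < 0
    · -- negative: flip sign
      have hc : (p:ℚ)/q < 0 := (div_neg_iff_int p q).mpr hneg
      rw [if_pos hc] at hstep
      have hmeas : measCF (-p, q) ≤ m := by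
        have : ¬ (-p * q < 0) := by nlinarith
        simp only [measCF, if_pos hneg, if_neg this] at hm ⊢
        omega
      obtain ⟨n, h1, h2⟩ := ih (-p) q hmeas
      refine ⟨n + 1, ?_, ?_⟩ <;>
        rw [Function.iterate_succ_apply, hstep]
      · exact h1
      · rw [h2, Int.neg_gcd]
    · have hpos : 0 < p * q := by
        rcases lt_trichotomy (p * q) 0 with h | h | h
        · exact absurd h hneg
        · exact absurd (mul_eq_zero.mp h) (by tauto)
        · exact h
      have hc : ¬ ((p:ℚ)/q < 0) := by rw [div_neg_iff_int]; omega
      rw [if_neg hc] at hstep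
      have hsgn := mul_pos_iff.mp hpos
      by_cases hlt : (p:ℚ)/q < 1
      · rw [if_pos hlt] at hstep
        have habs : p.natAbs < q.natAbs := (div_lt_one_iff_int hpos).mp hlt
        have habs2 : (2*p - q).natAbs < q.natAbs := by
          rcases hsgn with ⟨h1, h2⟩ | ⟨h1, h2⟩ <;> omega
        have hmeas : measCF (p, 2*p - q) ≤ m := by
          simp only [measCF, if_neg hneg] at hm
          simp only [measCF]
          split_ifs <;> omega
        obtain ⟨n, h1, h2⟩ := ih p (2*p - q) hmeas
        refine ⟨n + 1, ?_, ?_⟩ <;>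
          rw [Function.iterate_succ_apply, hstep]
        · exact h1
        · rw [h2]
          have : 2*p - q = -q + 2 * p := by ring
          rw [this, int_gcd_shift p (-q) 2, Int.gcd_neg]
      · rw [if_neg hlt] at hstep
        have habs : ¬ (p.natAbs < q.natAbs) := fun h => hlt ((div_lt_one_iff_int hpos).mpr h)
        have habs2 : (2*q - p).natAbs < p.natAbs := by
          rcases hsgn with ⟨h1, h2⟩ | ⟨h1, h2⟩ <;> omega
        have hmeas : measCF (2*q - p, q) ≤ m := by
          simp only [measCF, if_neg hneg] at hm
          simp only [measCF]
          split_ifs <;> omega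
        obtain ⟨n, h1, h2⟩ := ih (2*q - p) q hmeas
        refine ⟨n + 1, ?_, ?_⟩ <;>
          rw [Function.iterate_succ_apply, hstep]
        · exact h1
        · rw [h2]
          have : 2*q - p = -p + 2 * q := by ring
          rw [this, Int.gcd_comm, int_gcd_shift q (-p) 2, Int.gcd_comm, Int.neg_gcd]

theorem reflective_euclidean_terminates (p q : ℤ) :
    ∃ n : ℕ,
      ((stepCF^[n] (p, q)).1 = (stepCF^[n] (p, q)).2 ∨
        (stepCF^[n] (p, q)).1 = 0 ∨ (stepCF^[n] (p, q)).2 = 0) ∧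
      ((p, q) ≠ (0, 0) →
        ((stepCF^[n] (p, q)).1 ≠ 0 →
          (stepCF^[n] (p, q)).1.natAbs = Int.gcd p q) ∧
        ((stepCF^[n] (p, q)).2 ≠ 0 →
          (stepCF^[n] (p, q)).2.natAbs = Int.gcd p q)) := by
  obtain ⟨n, h1, h2⟩ := key (measCF (p, q)) p q le_rfl
  refine ⟨n, h1, fun _ => ⟨fun hne => ?_, fun hne => ?_⟩⟩
  · rw [← h2]
    rcases h1 with h | h | h
    · rw [h, Int.gcd_self]
    · exact absurd h hne
    · rw [h, Int.gcd_zero_right]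
  · rw [← h2]
    rcases h1 with h | h | h
    · rw [← h, Int.gcd_self]
    · rw [h, Int.gcd_zero_left]
    · exact absurd h hne
end

section
/- The infinite measure with density f(x) = 1/(-x) on (-∞,0), 1/(x(1-x)) on (0,1), and 1/(x-1) on (1,∞) is invariant under the map t defined by t(x) = -x for x < 0, t(x) = x/(2x-1) for 0 < x < 1, t(x) = 2-x for x > 1. -/
open MeasureTheory

/-- The reflective continued fraction map on the real line. -/
noncomputable def tCF (x : ℝ) : ℝ :=
  if x < 0 then -x else if x < 1 then x / (2 * x - 1) else 2 - x

/-- The invariant density `1/(-x)` on `(-∞,0)`, `1/(x(1-x))` on `(0,1)`,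
`1/(x-1)` on `(1,∞)`. -/
noncomputable def fCF (x : ℝ) : ℝ :=
  if x < 0 then 1 / (-x) else if x < 1 then 1 / (x * (1 - x)) else 1 / (x - 1)

noncomputable def muCF : Measure ℝ :=
  volume.withDensity fun x => ENNReal.ofReal (fCF x)

/-- One-dimensional change of variables for lower integrals. -/
lemma lintegral_image_1d {s : Set ℝ} {f f' : ℝ → ℝ} (hs : MeasurableSet s)
    (hf' : ∀ x ∈ s, HasDerivWithinAt f (f' x) s x) (hf : Set.InjOn f s) (g : ℝ → ENNReal) :
    ∫⁻ x in f '' s, g x = ∫⁻ x in s, ENNReal.ofReal |f' x| * g (f x) := by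
  simpa only [ContinuousLinearMap.det_toSpanSingleton] using
    lintegral_image_eq_lintegral_abs_det_fderiv_mul volume hs
      (fun x hx => (hf' x hx).hasFDerivWithinAt) hf g

lemma nu_split (ν : Measure ℝ) (hν : ∀ a : ℝ, ν {a} = 0) {S : Set ℝ}
    (hS : MeasurableSet S) (a : ℝ) :
    ν S = ν (S ∩ Set.Iio a) + ν (S ∩ Set.Ioi a) := by
  have h1 := measure_inter_add_diff (μ := ν) S (measurableSet_Iio (a := a))
  have h2 : S \ Set.Iio a = S ∩ Set.Ici a := by
    ext x; simp [not_lt]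
  have h3 : ν (S ∩ Set.Ici a) = ν (S ∩ Set.Ioi a) :=
    measure_congr (ae_eq_set_inter (ae_eq_refl S) (Ioi_ae_eq_Ici' (hν a)).symm)
  rw [← h1, h2, h3]

lemma ginv (x : ℝ) (hx : 2 * x - 1 ≠ 0) : x / (2 * x - 1) / (2 * (x / (2 * x - 1)) - 1) = x := by
  have key : 2 * (x / (2 * x - 1)) - 1 = 1 / (2 * x - 1) := by
    field_simp
    ring
  rw [key, one_div, div_eq_mul_inv (x / (2 * x - 1)) ((2 * x - 1)⁻¹), inv_inv,
    div_mul_cancel₀ _ hx]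

theorem reflective_cf_invariant_measure (A : Set ℝ) (hA : MeasurableSet A) :
    muCF (tCF ⁻¹' A) = muCF A := by
  classical
  -- measurability of tCF and fCF
  have htCF : Measurable tCF := by
    unfold tCF
    apply Measurable.ite (measurableSet_lt measurable_id measurable_const) measurable_neg
    apply Measurable.ite (measurableSet_lt measurable_id measurable_const)
    · exact measurable_id.div ((measurable_const.mul measurable_id).sub measurable_const)
    · exact measurable_const.sub measurable_id
  have hT : MeasurableSet (tCF ⁻¹' A) := htCF hA
  -- auxiliary densities
  set g1 : ℝ → ENNReal := fun y => ENNReal.ofReal (1 / y) with hg1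
  set g2 : ℝ → ENNReal := fun y => ENNReal.ofReal (1 / (y * (y - 1))) with hg2
  set g3 : ℝ → ENNReal := fun y => ENNReal.ofReal (1 / (1 - y)) with hg3
  -- null singletons for withDensity measures
  have hnull : ∀ (h : ℝ → ENNReal) (a : ℝ), volume.withDensity h {a} = 0 := by
    intro h a
    exact withDensity_absolutelyContinuous volume h (measure_singleton a)
  set ν1 := volume.withDensity g1 with hν1
  set ν2 := volume.withDensity g2 with hν2
  set ν3 := volume.withDensity g3 with hν3
  -- Set identities for the four branches
  have hB1 : tCF ⁻¹' A ∩ Set.Iio 0 = (fun y : ℝ => -y) '' (A ∩ Set.Ioi 0) := by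
    ext x
    simp only [Set.mem_inter_iff, Set.mem_preimage, Set.mem_image, Set.mem_Iio, Set.mem_Ioi]
    constructor
    · rintro ⟨hxA, hx0⟩
      refine ⟨-x, ⟨?_, by linarith⟩, by ring⟩
      simpa [tCF, hx0] using hxA
    · rintro ⟨y, ⟨hyA, hy0⟩, rfl⟩
      refine ⟨?_, by linarith⟩
      simpa [tCF, show -y < 0 by linarith] using hyA
  have hB2 : tCF ⁻¹' A ∩ Set.Ioo 0 (1/2) = (fun y : ℝ => y / (2 * y - 1)) '' (A ∩ Set.Iio 0) := by
    ext x
    simp only [Set.mem_inter_iff, Set.mem_preimage, Set.mem_image, Set.mem_Ioo, Set.mem_Iio]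
    constructor
    · rintro ⟨hxA, hx0, hx2⟩
      have h2 : 2 * x - 1 < 0 := by linarith
      refine ⟨x / (2 * x - 1), ⟨?_, div_neg_of_pos_of_neg hx0 h2⟩, ginv x h2.ne⟩
      have ht : tCF x = x / (2 * x - 1) := by
        simp [tCF, not_lt.2 hx0.le, show x < 1 by linarith]
      rwa [ht] at hxA
    · rintro ⟨y, ⟨hyA, hy0⟩, rfl⟩
      have h2 : 2 * y - 1 < 0 := by linarith
      have hu0 : 0 < y / (2 * y - 1) := div_pos_of_neg_of_neg hy0 h2
      have hu2 : y / (2 * y - 1) < 1/2 := by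
        rw [div_lt_iff_of_neg h2]; linarith
      refine ⟨?_, hu0, hu2⟩
      have ht : tCF (y / (2 * y - 1)) = y := by
        rw [tCF, if_neg (not_lt.2 hu0.le), if_pos (by linarith), ginv y h2.ne]
      rwa [ht]
  have hB3 : tCF ⁻¹' A ∩ Set.Ioo (1/2) 1 = (fun y : ℝ => y / (2 * y - 1)) '' (A ∩ Set.Ioi 1) := by
    ext x
    simp only [Set.mem_inter_iff, Set.mem_preimage, Set.mem_image, Set.mem_Ioo, Set.mem_Ioi]
    constructor
    · rintro ⟨hxA, hx2, hx1⟩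
      have h2 : 0 < 2 * x - 1 := by linarith
      refine ⟨x / (2 * x - 1), ⟨?_, ?_⟩, ginv x h2.ne'⟩
      · have ht : tCF x = x / (2 * x - 1) := by
          simp [tCF, not_lt.2 (by linarith : (0:ℝ) ≤ x), hx1]
        rwa [ht] at hxA
      · rw [lt_div_iff₀ h2]; linarith
    · rintro ⟨y, ⟨hyA, hy1⟩, rfl⟩
      have h2 : 0 < 2 * y - 1 := by linarith
      have hu2 : 1/2 < y / (2 * y - 1) := by
        rw [lt_div_iff₀ h2]; linarith
      have hu1 : y / (2 * y - 1) < 1 := by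
        rw [div_lt_one h2]; linarith
      refine ⟨?_, hu2, hu1⟩
      have ht : tCF (y / (2 * y - 1)) = y := by
        rw [tCF, if_neg (not_lt.2 (by linarith : (0:ℝ) ≤ y / (2 * y - 1))), if_pos hu1,
          ginv y h2.ne']
      rwa [ht]
  have hB4 : tCF ⁻¹' A ∩ Set.Ioi 1 = (fun y : ℝ => 2 - y) '' (A ∩ Set.Iio 1) := by
    ext x
    simp only [Set.mem_inter_iff, Set.mem_preimage, Set.mem_image, Set.mem_Ioi, Set.mem_Iio]
    constructor
    · rintro ⟨hxA, hx1⟩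
      refine ⟨2 - x, ⟨?_, by linarith⟩, by ring⟩
      have ht : tCF x = 2 - x := by
        simp [tCF, not_lt.2 (by linarith : (0:ℝ) ≤ x), not_lt.2 hx1.le]
      rwa [ht] at hxA
    · rintro ⟨y, ⟨hyA, hy1⟩, rfl⟩
      refine ⟨?_, by linarith⟩
      have ht : tCF (2 - y) = y := by
        rw [tCF, if_neg (not_lt.2 (by linarith : (0:ℝ) ≤ 2 - y)),
          if_neg (not_lt.2 (by linarith : (1:ℝ) ≤ 2 - y))]
        ring
      rwa [ht]
  -- measurable pieces
  have hm1 : MeasurableSet (A ∩ Set.Ioi (0:ℝ)) := hA.inter measurableSet_Ioi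
  have hm2 : MeasurableSet (A ∩ Set.Iio (0:ℝ)) := hA.inter measurableSet_Iio
  have hm3 : MeasurableSet (A ∩ Set.Ioi (1:ℝ)) := hA.inter measurableSet_Ioi
  have hm4 : MeasurableSet (A ∩ Set.Iio (1:ℝ)) := hA.inter measurableSet_Iio
  have hmmid : MeasurableSet (A ∩ Set.Ioo (0:ℝ) 1) := hA.inter measurableSet_Ioo
  -- change of variables on each piece
  have P1 : muCF (tCF ⁻¹' A ∩ Set.Iio 0) = ν1 (A ∩ Set.Ioi 0) := by
    rw [muCF, withDensity_apply _ (hT.inter measurableSet_Iio), hB1,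
      lintegral_image_1d hm1 (f' := fun _ => (-1 : ℝ))
        (fun x _ => (hasDerivAt_neg' (x := x)).hasDerivWithinAt)
        (fun a _ b _ h => by simpa using neg_injective h),
      hν1, withDensity_apply _ hm1]
    apply setLIntegral_congr_fun hm1
    intro y hy
    beta_reduce
    rcases hy with ⟨_, hy0⟩
    have : fCF (-y) = 1 / y := by
      simp [fCF, show -y < 0 by simpa using hy0]
    simp [this, hg1]
  have P2 : muCF (tCF ⁻¹' A ∩ Set.Ioo 0 (1/2)) = ν2 (A ∩ Set.Iio 0) := by
    rw [muCF, withDensity_apply _ (hT.inter measurableSet_Ioo), hB2,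
      lintegral_image_1d hm2 (f' := fun x => (1 * (2 * x - 1) - x * (2 * 1)) / (2 * x - 1) ^ 2)
        (fun x hx => by
          have h2 : 2 * x - 1 ≠ 0 := by
            rcases hx with ⟨_, hx0⟩
            simp only [Set.mem_Iio] at hx0
            intro h; nlinarith
          exact ((hasDerivAt_id' (x := x)).div
            (((hasDerivAt_id' (x := x)).const_mul 2).sub_const 1) h2).hasDerivWithinAt)
        (fun a ha b hb h => by
          rcases ha with ⟨_, ha0⟩; rcases hb with ⟨_, hb0⟩
          simp only [Set.mem_Iio] at ha0 hb0
          have h2a : 2 * a - 1 ≠ 0 := by intro h; nlinarith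
          have h2b : 2 * b - 1 ≠ 0 := by intro h; nlinarith
          have := congrArg (fun z : ℝ => z / (2 * z - 1)) h
          simpa [ginv a h2a, ginv b h2b] using this),
      hν2, withDensity_apply _ hm2]
    apply setLIntegral_congr_fun hm2
    intro y hy
    beta_reduce
    rcases hy with ⟨_, hy0⟩
    simp only [Set.mem_Iio] at hy0
    have h2 : 2 * y - 1 < 0 := by linarith
    have h2ne : 2 * y - 1 ≠ 0 := h2.ne
    have hu0 : 0 < y / (2 * y - 1) := div_pos_of_neg_of_neg hy0 h2
    have hu1 : y / (2 * y - 1) < 1 := by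
      rw [div_lt_iff_of_neg h2]; linarith
    have hnum : (1 * (2 * y - 1) - y * (2 * 1)) = -1 := by ring
    have habs : |(1 * (2 * y - 1) - y * (2 * 1)) / (2 * y - 1) ^ 2| = 1 / (2 * y - 1) ^ 2 := by
      rw [hnum, abs_div, abs_neg, abs_one, abs_of_pos (by positivity)]
    have hf : fCF (y / (2 * y - 1)) = 1 / ((y / (2 * y - 1)) * (1 - y / (2 * y - 1))) := by
      simp [fCF, not_lt.2 hu0.le, hu1]
    rw [habs, hf, ← ENNReal.ofReal_mul (by positivity), hg2]
    congr 1
    have hyne : y ≠ 0 := hy0.ne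
    have hy1 : y - 1 ≠ 0 := by intro h; nlinarith
    have hprod : (y / (2 * y - 1)) * (1 - y / (2 * y - 1)) = (y * (y - 1)) / (2 * y - 1) ^ 2 := by
      rw [one_sub_div h2ne, div_mul_div_comm, sq]
      ring
    rw [hprod, one_div_div, div_mul_div_comm, one_mul, div_mul_eq_div_div,
      div_self (pow_ne_zero 2 h2ne)]
  have P3 : muCF (tCF ⁻¹' A ∩ Set.Ioo (1/2) 1) = ν2 (A ∩ Set.Ioi 1) := by
    rw [muCF, withDensity_apply _ (hT.inter measurableSet_Ioo), hB3,
      lintegral_image_1d hm3 (f' := fun x => (1 * (2 * x - 1) - x * (2 * 1)) / (2 * x - 1) ^ 2)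
        (fun x hx => by
          have h2 : 2 * x - 1 ≠ 0 := by
            rcases hx with ⟨_, hx0⟩
            simp only [Set.mem_Ioi] at hx0
            intro h; nlinarith
          exact ((hasDerivAt_id' (x := x)).div
            (((hasDerivAt_id' (x := x)).const_mul 2).sub_const 1) h2).hasDerivWithinAt)
        (fun a ha b hb h => by
          rcases ha with ⟨_, ha0⟩; rcases hb with ⟨_, hb0⟩
          simp only [Set.mem_Ioi] at ha0 hb0
          have h2a : 2 * a - 1 ≠ 0 := by intro h; nlinarith
          have h2b : 2 * b - 1 ≠ 0 := by intro h; nlinarith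
          have := congrArg (fun z : ℝ => z / (2 * z - 1)) h
          simpa [ginv a h2a, ginv b h2b] using this),
      hν2, withDensity_apply _ hm3]
    apply setLIntegral_congr_fun hm3
    intro y hy
    beta_reduce
    rcases hy with ⟨_, hy0⟩
    simp only [Set.mem_Ioi] at hy0
    have h2 : 0 < 2 * y - 1 := by linarith
    have h2ne : 2 * y - 1 ≠ 0 := h2.ne'
    have hu0 : 0 < y / (2 * y - 1) := div_pos (by linarith) h2
    have hu2 : 1/2 < y / (2 * y - 1) := by rw [lt_div_iff₀ h2]; linarith
    have hu1 : y / (2 * y - 1) < 1 := by rw [div_lt_one h2]; linarith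
    have hnum : (1 * (2 * y - 1) - y * (2 * 1)) = -1 := by ring
    have habs : |(1 * (2 * y - 1) - y * (2 * 1)) / (2 * y - 1) ^ 2| = 1 / (2 * y - 1) ^ 2 := by
      rw [hnum, abs_div, abs_neg, abs_one, abs_of_pos (by positivity)]
    have hf : fCF (y / (2 * y - 1)) = 1 / ((y / (2 * y - 1)) * (1 - y / (2 * y - 1))) := by
      simp [fCF, not_lt.2 hu0.le, hu1]
    rw [habs, hf, ← ENNReal.ofReal_mul (by positivity), hg2]
    congr 1
    have hyne : y ≠ 0 := by positivity
    have hy1 : y - 1 ≠ 0 := by intro h; nlinarith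
    have hprod : (y / (2 * y - 1)) * (1 - y / (2 * y - 1)) = (y * (y - 1)) / (2 * y - 1) ^ 2 := by
      rw [one_sub_div h2ne, div_mul_div_comm, sq]
      ring
    rw [hprod, one_div_div, div_mul_div_comm, one_mul, div_mul_eq_div_div,
      div_self (pow_ne_zero 2 h2ne)]
  have P4 : muCF (tCF ⁻¹' A ∩ Set.Ioi 1) = ν3 (A ∩ Set.Iio 1) := by
    rw [muCF, withDensity_apply _ (hT.inter measurableSet_Ioi), hB4,
      lintegral_image_1d hm4 (f' := fun _ => (-1 : ℝ))
        (fun x _ => ((HasDerivAt.const_sub 2 (hasDerivAt_id' (x := x)))).hasDerivWithinAt)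
        (fun a _ b _ h => by linarith),
      hν3, withDensity_apply _ hm4]
    apply setLIntegral_congr_fun hm4
    intro y hy
    beta_reduce
    rcases hy with ⟨_, hy1⟩
    simp only [Set.mem_Iio] at hy1
    have : fCF (2 - y) = 1 / (1 - y) := by
      rw [fCF, if_neg (not_lt.2 (by linarith : (0:ℝ) ≤ 2 - y)),
        if_neg (not_lt.2 (by linarith : (1:ℝ) ≤ 2 - y))]
      ring_nf
    simp [this, hg3]
  -- decompose the preimage measure
  have hmuCFnull : ∀ a : ℝ, muCF {a} = 0 := fun a =>
    withDensity_absolutelyContinuous volume _ (measure_singleton a)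
  have hTsplit : muCF (tCF ⁻¹' A) =
      muCF (tCF ⁻¹' A ∩ Set.Iio 0) + muCF (tCF ⁻¹' A ∩ Set.Ioo 0 (1/2)) +
      muCF (tCF ⁻¹' A ∩ Set.Ioo (1/2) 1) + muCF (tCF ⁻¹' A ∩ Set.Ioi 1) := by
    rw [nu_split muCF hmuCFnull hT 0]
    rw [nu_split muCF hmuCFnull (hT.inter measurableSet_Ioi) (1/2)]
    have e1 : tCF ⁻¹' A ∩ Set.Ioi 0 ∩ Set.Iio (1/2) = tCF ⁻¹' A ∩ Set.Ioo 0 (1/2) := by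
      ext x; simp [Set.mem_Ioo, and_assoc]
    have e2 : tCF ⁻¹' A ∩ Set.Ioi 0 ∩ Set.Ioi (1/2) = tCF ⁻¹' A ∩ Set.Ioi (1/2) := by
      ext x; constructor
      · rintro ⟨⟨h, _⟩, h2⟩; exact ⟨h, h2⟩
      · rintro ⟨h, h2⟩
        simp only [Set.mem_Ioi] at h2
        exact ⟨⟨h, by simp only [Set.mem_Ioi]; linarith⟩, h2⟩
    rw [e1, e2, nu_split muCF hmuCFnull ((hT.inter measurableSet_Ioi)) 1]
    have e3 : tCF ⁻¹' A ∩ Set.Ioi (1/2) ∩ Set.Iio 1 = tCF ⁻¹' A ∩ Set.Ioo (1/2) 1 := by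
      ext x; simp [Set.mem_Ioo, and_assoc]
    have e4 : tCF ⁻¹' A ∩ Set.Ioi (1/2) ∩ Set.Ioi 1 = tCF ⁻¹' A ∩ Set.Ioi 1 := by
      ext x; constructor
      · rintro ⟨⟨h, _⟩, h2⟩; exact ⟨h, h2⟩
      · rintro ⟨h, h2⟩
        simp only [Set.mem_Ioi] at h2
        exact ⟨⟨h, by simp only [Set.mem_Ioi]; linarith⟩, h2⟩
    rw [e3, e4]
    ring
  -- split ν1 over A∩Ioi 0 and ν3 over A∩Iio 1
  have hν1split : ν1 (A ∩ Set.Ioi 0) = ν1 (A ∩ Set.Ioo 0 1) + ν1 (A ∩ Set.Ioi 1) := by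
    rw [nu_split ν1 (hnull g1) hm1 1]
    congr 2
    · ext x; simp [Set.mem_Ioo, and_assoc]
    · ext x; constructor
      · rintro ⟨⟨h, _⟩, h2⟩; exact ⟨h, h2⟩
      · rintro ⟨h, h2⟩
        simp only [Set.mem_Ioi] at h2
        exact ⟨⟨h, by simp only [Set.mem_Ioi]; linarith⟩, h2⟩
  have hν3split : ν3 (A ∩ Set.Iio 1) = ν3 (A ∩ Set.Iio 0) + ν3 (A ∩ Set.Ioo 0 1) := by
    rw [nu_split ν3 (hnull g3) hm4 0]
    congr 2
    · ext x; constructor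
      · rintro ⟨⟨h, _⟩, h2⟩; exact ⟨h, h2⟩
      · rintro ⟨h, h2⟩
        simp only [Set.mem_Iio] at h2
        exact ⟨⟨h, by simp only [Set.mem_Iio]; linarith⟩, h2⟩
    · ext x; constructor
      · rintro ⟨⟨h, h1⟩, h2⟩
        simp only [Set.mem_Iio] at h1
        simp only [Set.mem_Ioi] at h2
        exact ⟨h, h2, h1⟩
      · rintro ⟨h, h1, h2⟩
        exact ⟨⟨h, h2⟩, h1⟩
  -- split muCF A
  have hAsplit : muCF A = muCF (A ∩ Set.Iio 0) + muCF (A ∩ Set.Ioo 0 1) + muCF (A ∩ Set.Ioi 1) := by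
    rw [nu_split muCF hmuCFnull hA 0, nu_split muCF hmuCFnull hm1 1]
    have e1 : A ∩ Set.Ioi 0 ∩ Set.Iio 1 = A ∩ Set.Ioo 0 1 := by
      ext x; simp [Set.mem_Ioo, and_assoc]
    have e2 : A ∩ Set.Ioi 0 ∩ Set.Ioi 1 = A ∩ Set.Ioi 1 := by
      ext x; constructor
      · rintro ⟨⟨h, _⟩, h2⟩; exact ⟨h, h2⟩
      · rintro ⟨h, h2⟩
        simp only [Set.mem_Ioi] at h2
        exact ⟨⟨h, by simp only [Set.mem_Ioi]; linarith⟩, h2⟩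
    rw [e1, e2, add_assoc]
  -- final combination: pointwise density identities on each region
  have hmeas2 : Measurable g2 := by
    apply ENNReal.measurable_ofReal.comp
    exact measurable_const.div (measurable_id.mul (measurable_id.sub measurable_const))
  have hmeas1 : Measurable g1 := by
    apply ENNReal.measurable_ofReal.comp
    exact measurable_const.div measurable_id
  have combneg : ν2 (A ∩ Set.Iio 0) + ν3 (A ∩ Set.Iio 0) = muCF (A ∩ Set.Iio 0) := by
    rw [hν2, hν3, muCF, withDensity_apply _ hm2, withDensity_apply _ hm2,
      withDensity_apply _ hm2, ← lintegral_add_left hmeas2]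
    apply setLIntegral_congr_fun hm2
    intro y hy
    beta_reduce
    rcases hy with ⟨_, hy0⟩
    simp only [Set.mem_Iio] at hy0
    have h1 : (0:ℝ) < y * (y - 1) := by nlinarith
    have h2 : (0:ℝ) < 1 - y := by linarith
    simp only [hg2, hg3]
    rw [← ENNReal.ofReal_add (by positivity) (by positivity)]
    have : fCF y = 1 / (-y) := by simp [fCF, hy0]
    rw [this]
    congr 1
    have hyne : y ≠ 0 := hy0.ne
    rw [div_add_div _ _ h1.ne' h2.ne', div_eq_div_iff (mul_pos h1 h2).ne' (neg_pos.2 hy0).ne']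
    ring
  have combmid : ν1 (A ∩ Set.Ioo 0 1) + ν3 (A ∩ Set.Ioo 0 1) = muCF (A ∩ Set.Ioo 0 1) := by
    rw [hν1, hν3, muCF, withDensity_apply _ hmmid, withDensity_apply _ hmmid,
      withDensity_apply _ hmmid, ← lintegral_add_left hmeas1]
    apply setLIntegral_congr_fun hmmid
    intro y hy
    beta_reduce
    rcases hy with ⟨_, hy0, hy1⟩
    have h2 : (0:ℝ) < 1 - y := by linarith
    simp only [hg1, hg3]
    rw [← ENNReal.ofReal_add (by positivity) (by positivity)]
    have : fCF y = 1 / (y * (1 - y)) := by simp [fCF, not_lt.2 hy0.le, hy1]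
    rw [this]
    congr 1
    rw [div_add_div _ _ hy0.ne' h2.ne', div_eq_div_iff (mul_pos hy0 h2).ne' (mul_pos hy0 h2).ne']
    ring
  have combpos : ν1 (A ∩ Set.Ioi 1) + ν2 (A ∩ Set.Ioi 1) = muCF (A ∩ Set.Ioi 1) := by
    rw [hν1, hν2, muCF, withDensity_apply _ hm3, withDensity_apply _ hm3,
      withDensity_apply _ hm3, ← lintegral_add_left hmeas1]
    apply setLIntegral_congr_fun hm3
    intro y hy
    beta_reduce
    rcases hy with ⟨_, hy1⟩
    simp only [Set.mem_Ioi] at hy1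
    have hy0 : (0:ℝ) < y := by linarith
    have h1 : (0:ℝ) < y * (y - 1) := by nlinarith
    simp only [hg1, hg2]
    rw [← ENNReal.ofReal_add (by positivity) (by positivity)]
    have : fCF y = 1 / (y - 1) := by
      simp [fCF, not_lt.2 hy0.le, not_lt.2 hy1.le]
    rw [this]
    congr 1
    have hy2 : (0:ℝ) < y - 1 := by linarith
    rw [div_add_div _ _ hy0.ne' h1.ne', div_eq_div_iff (mul_pos hy0 h1).ne' hy2.ne']
    ring
  calc muCF (tCF ⁻¹' A)
      = ν1 (A ∩ Set.Ioi 0) + ν2 (A ∩ Set.Iio 0) + ν2 (A ∩ Set.Ioi 1) + ν3 (A ∩ Set.Iio 1) := by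
        rw [hTsplit, P1, P2, P3, P4]
    _ = (ν2 (A ∩ Set.Iio 0) + ν3 (A ∩ Set.Iio 0)) + (ν1 (A ∩ Set.Ioo 0 1) + ν3 (A ∩ Set.Ioo 0 1))
        + (ν1 (A ∩ Set.Ioi 1) + ν2 (A ∩ Set.Ioi 1)) := by
        rw [hν1split, hν3split]; ring
    _ = muCF A := by rw [combneg, combmid, combpos, hAsplit]
end

section
/- The hyperbolic area (with respect to the measure dx·dy/y^2 on the upper half-plane) of the vertical translate by α > 0 of the ideal triangle with vertices 0, 1, ∞ equals J(α) = ∫_0^1 dx/(α + √(x(1-x))) = π − 2·arccos(1/(2α))/√(1 − 1/(4α^2)) for α > 1/2. -/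
open MeasureTheory Real

section Aux
open intervalIntegral

lemma cos_half_pos {t : ℝ} (h1 : -(π/2) ≤ t) (h2 : t ≤ π/2) : 0 < Real.cos (t/2) := by
  apply Real.cos_pos_of_mem_Ioo
  constructor <;> [linarith [Real.pi_pos]; linarith [Real.pi_pos]]

lemma deriv_G (a : ℝ) (ha : 1 < a) {t : ℝ} (h1 : -(π/2) ≤ t) (h2 : t ≤ π/2) :
    HasDerivAt (fun t => 2 / Real.sqrt (a^2-1) *
      Real.arctan (Real.sqrt ((a-1)/(a+1)) * Real.tan (t/2))) (1/(a + Real.cos t)) t := by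
  set c := Real.sqrt ((a-1)/(a+1)) with hc
  have hfrac : (0:ℝ) ≤ (a-1)/(a+1) := by
    apply div_nonneg <;> linarith
  have hcos : Real.cos (t/2) ≠ 0 := (cos_half_pos h1 h2).ne'
  have h1' : HasDerivAt (fun t : ℝ => t/2) (1/2) t := (hasDerivAt_id t).div_const 2
  have h2' : HasDerivAt (fun t : ℝ => Real.tan (t/2)) ((1 / Real.cos (t/2)^2) * (1/2)) t :=
    HasDerivAt.comp (h₂ := Real.tan) t (Real.hasDerivAt_tan hcos) h1'
  have h3 : HasDerivAt (fun t : ℝ => c * Real.tan (t/2)) (c * ((1 / Real.cos (t/2)^2) * (1/2))) t :=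
    h2'.const_mul c
  have h4 : HasDerivAt (fun t : ℝ => Real.arctan (c * Real.tan (t/2)))
      ((1 / (1 + (c * Real.tan (t/2))^2)) * (c * ((1 / Real.cos (t/2)^2) * (1/2)))) t :=
    (Real.hasDerivAt_arctan _).comp t h3
  have h5 := h4.const_mul (2 / Real.sqrt (a^2-1))
  refine h5.congr_deriv ?_; symm
  have hc2 : c^2 = (a-1)/(a+1) := Real.sq_sqrt hfrac
  have hcpos : 0 < c := Real.sqrt_pos.2 (by apply div_pos <;> linarith)
  have hs : Real.sqrt (a^2-1) = c * (a+1) := by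
    have hsq : (c*(a+1))^2 = a^2-1 := by
      rw [mul_pow, hc2]
      field_simp
      ring
    rw [← hsq, Real.sqrt_sq (by positivity)]
  have ht2 : (2:ℝ) * (t/2) = t := by ring
  have hden : Real.cos (t/2)^2 * (1 + (c * Real.tan (t/2))^2) = (a + Real.cos t)/(a+1) := by
    have e : Real.cos (t/2)^2 * (1 + (c * Real.tan (t/2))^2)
        = Real.cos (t/2)^2 + c^2 * Real.sin (t/2)^2 := by
      rw [Real.tan_eq_sin_div_cos]
      field_simp
    rw [e, hc2, Real.sin_sq, Real.cos_sq, ht2]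
    field_simp
    ring
  have hcosq : Real.cos (t/2)^2 ≠ 0 := pow_ne_zero _ hcos
  have hapos : (0:ℝ) < a + Real.cos t := by nlinarith [Real.neg_one_le_cos t]
  have h1pt : (0:ℝ) < 1 + (c * Real.tan (t/2))^2 := by positivity
  rw [hs]
  have e1 : 2 / (c*(a+1)) * (1 / (1 + (c * Real.tan (t/2))^2) * (c * (1 / Real.cos (t/2)^2 * (1/2))))
      = (1/(a+1)) * (1 / (Real.cos (t/2)^2 * (1 + (c * Real.tan (t/2))^2))) := by
    field_simp
  rw [e1, hden]
  field_simp

lemma int_inv_a_add_cos (a : ℝ) (ha : 1 < a) :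
    ∫ t in (-(π/2))..(π/2), 1/(a + Real.cos t)
      = 4 / Real.sqrt (a^2-1) * Real.arctan (Real.sqrt ((a-1)/(a+1))) := by
  have hcont : Continuous (fun t : ℝ => 1/(a + Real.cos t)) := by
    apply Continuous.div continuous_const (by continuity)
    intro t
    nlinarith [Real.neg_one_le_cos t]
  have hle : -(π/2) ≤ (π/2) := by linarith [Real.pi_pos]
  rw [intervalIntegral.integral_eq_sub_of_hasDerivAt
    (f := fun t => 2 / Real.sqrt (a^2-1) *
      Real.arctan (Real.sqrt ((a-1)/(a+1)) * Real.tan (t/2)))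
    (fun t ht => by
      rw [Set.uIcc_of_le hle] at ht
      exact deriv_G a ha ht.1 ht.2)
    (hcont.intervalIntegrable _ _)]
  have e1 : (π/2)/2 = π/4 := by ring
  have e2 : (-(π/2))/2 = -(π/4) := by ring
  rw [e1, e2, Real.tan_neg, Real.tan_pi_div_four, mul_neg, mul_one, Real.arctan_neg]
  ring

lemma arccos_eq_two_arctan {u : ℝ} (h0 : 0 < u) (h1 : u < 1) :
    Real.arccos u = 2 * Real.arctan (Real.sqrt ((1-u)/(1+u))) := by
  set θ := Real.arccos u with hθ
  have hθpos : 0 < θ := Real.arccos_pos.2 h1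
  have hθlt : θ < π/2 := Real.arccos_lt_pi_div_two.2 h0
  have hcosθ : Real.cos θ = u := Real.cos_arccos (by linarith) (by linarith)
  have hcoshalf : 0 < Real.cos (θ/2) := cos_half_pos (by linarith) (by linarith)
  have hsinhalf : 0 ≤ Real.sin (θ/2) := Real.sin_nonneg_of_nonneg_of_le_pi
    (by linarith) (by linarith [Real.pi_pos])
  have htan : 0 ≤ Real.tan (θ/2) := by
    rw [Real.tan_eq_sin_div_cos]; positivity
  have ht2 : (2:ℝ) * (θ/2) = θ := by ring
  have hsq : Real.tan (θ/2)^2 = (1-u)/(1+u) := by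
    rw [Real.tan_eq_sin_div_cos, div_pow, Real.sin_sq, Real.cos_sq, ht2, hcosθ]
    have : (0:ℝ) < 1 + u := by linarith
    field_simp
    ring
  have : Real.sqrt ((1-u)/(1+u)) = Real.tan (θ/2) := by
    rw [← hsq, Real.sqrt_sq htan]
  rw [this, Real.arctan_tan (by linarith) (by linarith)]
  ring

lemma part2 (α : ℝ) (hα : 1 / 2 < α) :
    (∫ x in (0:ℝ)..1, 1 / (α + Real.sqrt (x * (1 - x)))) =
      π - 2 * Real.arccos (1 / (2 * α)) / Real.sqrt (1 - 1 / (4 * α ^ 2)) := by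
  have hα0 : 0 < α := by linarith
  have hgcont : Continuous (fun x : ℝ => 1 / (α + Real.sqrt (x * (1 - x)))) := by
    apply Continuous.div continuous_const (by continuity)
    intro x
    have := Real.sqrt_nonneg (x * (1 - x))
    positivity
  have hsub : ∫ t in (-(π/2))..(π/2),
      (Real.cos t / 2) • (1 / (α + Real.sqrt (((1 + Real.sin t)/2) * (1 - (1 + Real.sin t)/2))))
      = ∫ x in (0:ℝ)..1, 1 / (α + Real.sqrt (x * (1 - x))) := by
    have := intervalIntegral.integral_comp_smul_deriv
      (f := fun t : ℝ => (1 + Real.sin t)/2) (f' := fun t : ℝ => Real.cos t / 2)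
      (g := fun x : ℝ => 1 / (α + Real.sqrt (x * (1 - x))))
      (a := -(π/2)) (b := π/2)
      (fun t _ => ((Real.hasDerivAt_sin t).const_add 1).div_const 2)
      (by fun_prop) hgcont
    simp only [Function.comp_apply] at this
    rw [this, Real.sin_neg, Real.sin_pi_div_two]
    norm_num
  rw [← hsub]
  have hcongr : ∀ t ∈ Set.uIcc (-(π/2)) (π/2),
      (Real.cos t / 2) • (1 / (α + Real.sqrt (((1 + Real.sin t)/2) * (1 - (1 + Real.sin t)/2))))
      = 1 - (2*α) * (1 / (2*α + Real.cos t)) := by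
    intro t ht
    rw [Set.uIcc_of_le (by linarith [Real.pi_pos])] at ht
    have hcos : 0 ≤ Real.cos t := Real.cos_nonneg_of_mem_Icc ⟨ht.1, ht.2⟩
    have hsq : ((1 + Real.sin t)/2) * (1 - (1 + Real.sin t)/2) = (Real.cos t / 2)^2 := by
      have := Real.sin_sq_add_cos_sq t
      nlinarith
    rw [hsq, Real.sqrt_sq (by linarith), smul_eq_mul]
    have h1 : (0:ℝ) < α + Real.cos t / 2 := by linarith
    have h2 : (0:ℝ) < 2*α + Real.cos t := by linarith
    rw [eq_sub_iff_add_eq, mul_one_div, mul_one_div,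
      div_add_div _ _ (ne_of_gt h1) (ne_of_gt h2), div_eq_one_iff_eq (by positivity)]
    ring
  rw [intervalIntegral.integral_congr hcongr]
  have hcont2 : Continuous (fun t : ℝ => 1 / (2*α + Real.cos t)) := by
    apply Continuous.div continuous_const (by continuity)
    intro t
    nlinarith [Real.neg_one_le_cos t]
  rw [intervalIntegral.integral_sub (intervalIntegrable_const)
    (((hcont2.intervalIntegrable _ _).const_mul _)),
    intervalIntegral.integral_const_mul, int_inv_a_add_cos (2*α) (by linarith)]
  have e0 : ∫ _t in (-(π/2))..(π/2), (1:ℝ) = π := by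
    simp
  rw [e0]
  have hs : Real.sqrt (1 - 1/(4*α^2)) = Real.sqrt ((2*α)^2 - 1) / (2*α) := by
    rw [show (1 - 1/(4*α^2)) = ((2*α)^2 - 1)/(2*α)^2 by field_simp; ring,
      Real.sqrt_div (by nlinarith), Real.sqrt_sq (by linarith)]
  have harg : (1 - 1/(2*α))/(1 + 1/(2*α)) = (2*α - 1)/(2*α + 1) := by
    rw [div_eq_div_iff (by positivity) (by positivity)]
    field_simp
  have harccos : Real.arccos (1/(2*α)) =
      2 * Real.arctan (Real.sqrt ((2*α - 1)/(2*α + 1))) := by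
    rw [arccos_eq_two_arctan (by positivity) (by rw [div_lt_one (by linarith)]; linarith), harg]
  rw [hs, harccos]
  have hspos : 0 < Real.sqrt ((2*α)^2 - 1) := Real.sqrt_pos.2 (by nlinarith)
  field_simp
  ring

lemma integrableOn_Ici_inv_sq {c : ℝ} (hc : 0 < c) :
    IntegrableOn (fun y : ℝ => 1/y^2) (Set.Ici c) := by
  have heq : Set.EqOn (fun y : ℝ => y ^ (-2:ℝ)) (fun y : ℝ => 1/y^2) (Set.Ioi c) := by
    intro y hy
    have hy0 : 0 < y := hc.trans hy
    simp only
    rw [show ((-2:ℝ)) = -((2:ℕ):ℝ) by norm_num, Real.rpow_neg hy0.le, Real.rpow_natCast, one_div]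
  rw [integrableOn_Ici_iff_integrableOn_Ioi]
  exact (integrableOn_Ioi_rpow_of_lt (by norm_num) hc).congr_fun heq measurableSet_Ioi

lemma integral_Ici_inv_sq {c : ℝ} (hc : 0 < c) :
    ∫ y in Set.Ici c, 1/y^2 = 1/c := by
  have heq : Set.EqOn (fun y : ℝ => 1/y^2) (fun y : ℝ => y ^ (-2:ℝ)) (Set.Ioi c) := by
    intro y hy
    have hy0 : 0 < y := hc.trans hy
    simp only
    rw [show ((-2:ℝ)) = -((2:ℕ):ℝ) by norm_num, Real.rpow_neg hy0.le, Real.rpow_natCast, one_div]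
  rw [MeasureTheory.integral_Ici_eq_integral_Ioi, setIntegral_congr_fun measurableSet_Ioi heq,
    integral_Ioi_rpow_of_lt (by norm_num) hc]
  norm_num
  exact Real.rpow_neg_one c

lemma part1 (α : ℝ) (hα : 1 / 2 < α) :
    (∫ p in {p : ℝ × ℝ | 0 ≤ p.1 ∧ p.1 ≤ 1 ∧ α + Real.sqrt (p.1 * (1 - p.1)) ≤ p.2},
        1 / p.2 ^ 2) = ∫ x in (0:ℝ)..1, 1 / (α + Real.sqrt (x * (1 - x))) := by
  have hα0 : 0 < α := by linarith
  set S : Set (ℝ × ℝ) := {p : ℝ × ℝ | 0 ≤ p.1 ∧ p.1 ≤ 1 ∧ α + Real.sqrt (p.1 * (1 - p.1)) ≤ p.2}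
    with hSdef
  set f : ℝ × ℝ → ℝ := fun p => 1 / p.2 ^ 2 with hfdef
  set c : ℝ → ℝ := fun x => α + Real.sqrt (x * (1 - x)) with hcdef
  have hcpos : ∀ x, 0 < c x := fun x => by
    have := Real.sqrt_nonneg (x * (1 - x)); simp only [hcdef]; linarith
  have hccont : Continuous c := by
    apply continuous_const.add
    exact Real.continuous_sqrt.comp (by continuity)
  have hicont : Continuous (fun x => 1 / c x) :=
    continuous_const.div hccont (fun x => (hcpos x).ne')
  have hS : MeasurableSet S := by
    have : IsClosed S := by
      rw [hSdef, show {p : ℝ × ℝ | 0 ≤ p.1 ∧ p.1 ≤ 1 ∧ α + Real.sqrt (p.1 * (1 - p.1)) ≤ p.2}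
        = {p : ℝ × ℝ | 0 ≤ p.1} ∩ ({p : ℝ × ℝ | p.1 ≤ 1} ∩
          {p : ℝ × ℝ | α + Real.sqrt (p.1 * (1 - p.1)) ≤ p.2}) from rfl]
      refine (isClosed_le continuous_const continuous_fst).inter
        ((isClosed_le continuous_fst continuous_const).inter
          (isClosed_le ?_ continuous_snd))
      exact hccont.comp continuous_fst
    exact this.measurableSet
  have hind : ∀ x y, S.indicator f (x, y)
      = (Set.Icc (0:ℝ) 1).indicator (fun _ => (Set.Ici (c x)).indicator (fun y => 1/y^2) y) x := by
    intro x y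
    by_cases hx : x ∈ Set.Icc (0:ℝ) 1
    · rw [Set.indicator_of_mem hx]
      by_cases hy : y ∈ Set.Ici (c x)
      · rw [Set.indicator_of_mem hy, Set.indicator_of_mem (show (x, y) ∈ S from ⟨hx.1, hx.2, hy⟩)]
      · rw [Set.indicator_of_notMem hy, Set.indicator_of_notMem]
        intro h
        exact hy h.2.2
    · rw [Set.indicator_of_notMem hx, Set.indicator_of_notMem]
      intro h
      exact hx ⟨h.1, h.2.1⟩
  have hinner : ∀ x, Integrable (fun y => S.indicator f (x, y)) volume := by
    intro x
    rw [show (fun y => S.indicator f (x, y)) = fun y =>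
      (Set.Icc (0:ℝ) 1).indicator (fun _ => (Set.Ici (c x)).indicator (fun y => 1/y^2) y) x
      from funext (hind x)]
    by_cases hx : x ∈ Set.Icc (0:ℝ) 1
    · simp only [Set.indicator_of_mem hx]
      exact (integrable_indicator_iff measurableSet_Ici).2 (integrableOn_Ici_inv_sq (hcpos x))
    · simp only [Set.indicator_of_notMem hx]
      exact integrable_zero _ _ _
  have hval : ∀ x, (∫ y, S.indicator f (x, y)) =
      (Set.Icc (0:ℝ) 1).indicator (fun x => 1 / c x) x := by
    intro x
    rw [show (fun y => S.indicator f (x, y)) = fun y =>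
      (Set.Icc (0:ℝ) 1).indicator (fun _ => (Set.Ici (c x)).indicator (fun y => 1/y^2) y) x
      from funext (hind x)]
    by_cases hx : x ∈ Set.Icc (0:ℝ) 1
    · simp only [Set.indicator_of_mem hx]
      rw [MeasureTheory.integral_indicator measurableSet_Ici, integral_Ici_inv_sq (hcpos x)]
    · simp only [Set.indicator_of_notMem hx]
      exact MeasureTheory.integral_zero _ _
  have hmeas : AEStronglyMeasurable (S.indicator f) (volume.prod volume) := by
    refine (Measurable.indicator ?_ hS).aestronglyMeasurable
    exact ((measurable_snd.pow_const 2).const_div 1)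
  have hnorm : Integrable (fun x => ∫ y, ‖S.indicator f (x, y)‖) volume := by
    have key : (fun x => ∫ y, ‖S.indicator f (x, y)‖) =
        fun x => (Set.Icc (0:ℝ) 1).indicator (fun x => 1 / c x) x := by
      funext x
      rw [show (fun y => ‖S.indicator f (x, y)‖) = fun y => S.indicator f (x, y) from
        funext fun y => Real.norm_of_nonneg (Set.indicator_nonneg (fun p _ => by positivity) _)]
      exact hval x
    rw [key]
    exact (integrable_indicator_iff measurableSet_Icc).2
      (hicont.continuousOn.integrableOn_compact isCompact_Icc)
  have hInt : Integrable (S.indicator f) (volume.prod volume) :=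
    (MeasureTheory.integrable_prod_iff hmeas).2 ⟨Filter.Eventually.of_forall hinner, hnorm⟩
  rw [← MeasureTheory.integral_indicator hS, MeasureTheory.Measure.volume_eq_prod,
    MeasureTheory.integral_prod _ hInt]
  simp only [hval]
  rw [MeasureTheory.integral_indicator measurableSet_Icc,
    MeasureTheory.integral_Icc_eq_integral_Ioc, ← intervalIntegral.integral_of_le zero_le_one]

end Aux

theorem hyperbolic_area_translated_ideal_triangle (α : ℝ) (hα : 1 / 2 < α) :
    ((∫ p in {p : ℝ × ℝ | 0 ≤ p.1 ∧ p.1 ≤ 1 ∧ α + Real.sqrt (p.1 * (1 - p.1)) ≤ p.2},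
        1 / p.2 ^ 2) = ∫ x in (0:ℝ)..1, 1 / (α + Real.sqrt (x * (1 - x)))) ∧
    ((∫ x in (0:ℝ)..1, 1 / (α + Real.sqrt (x * (1 - x)))) =
      π - 2 * Real.arccos (1 / (2 * α)) / Real.sqrt (1 - 1 / (4 * α ^ 2))) :=
  ⟨part1 α hα, part2 α hα⟩
end

section
/- The hyperbolic area of a Euclidean disk of radius r in the upper half-plane whose center has y-coordinate b > r equals I(α) = 2π(α/√(α²−1) − 1) where α = b/r. -/
open MeasureTheory Real

private lemma oneD_integral (b r : ℝ) (hr : 0 < r) (hbr : r < b) :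
    (∫ y in (b - r)..(b + r), 2 * Real.sqrt (r ^ 2 - (y - b) ^ 2) / y ^ 2)
      = 2 * π * (b / Real.sqrt (b ^ 2 - r ^ 2) - 1) := by
  have hd : 0 < b ^ 2 - r ^ 2 := by nlinarith
  have hsd : 0 < Real.sqrt (b ^ 2 - r ^ 2) := Real.sqrt_pos.2 hd
  have hsd2 : Real.sqrt (b ^ 2 - r ^ 2) ^ 2 = b ^ 2 - r ^ 2 := Real.sq_sqrt hd.le
  set c : ℝ := b / Real.sqrt (b ^ 2 - r ^ 2) with hc
  set G : ℝ → ℝ := fun y => 2 * (-(Real.sqrt (r ^ 2 - (y - b) ^ 2) / y)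
      - Real.arcsin ((y - b) / r)
      + c * Real.arcsin ((b * (y - b) + r ^ 2) / (r * y))) with hG
  have hbr0 : 0 < b - r := by linarith
  have hderiv : ∀ y ∈ Set.Ioo (b - r) (b + r),
      HasDerivAt G (2 * Real.sqrt (r ^ 2 - (y - b) ^ 2) / y ^ 2) y := by
    intro y hy
    obtain ⟨hy1, hy2⟩ := hy
    have hy0 : 0 < y := lt_trans hbr0 hy1
    have hs : 0 < r ^ 2 - (y - b) ^ 2 := by nlinarith
    set s : ℝ := Real.sqrt (r ^ 2 - (y - b) ^ 2) with hsdef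
    have hs0 : 0 < s := Real.sqrt_pos.2 hs
    have hs2 : s ^ 2 = r ^ 2 - (y - b) ^ 2 := Real.sq_sqrt hs.le
    -- derivative of the inner polynomial
    have hpoly : HasDerivAt (fun t : ℝ => r ^ 2 - (t - b) ^ 2) (-(2 * (y - b))) y := by
      have h := ((hasDerivAt_id y).sub_const b).pow 2
      simpa using h.const_sub (r ^ 2)
    have hsqrt : HasDerivAt (fun t : ℝ => Real.sqrt (r ^ 2 - (t - b) ^ 2))
        (-(2 * (y - b)) / (2 * s)) y := hpoly.sqrt hs.ne'
    -- term 1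
    have h1 : HasDerivAt (fun t : ℝ => -(Real.sqrt (r ^ 2 - (t - b) ^ 2) / t))
        ((b * (y - b) + r ^ 2) / (s * y ^ 2)) y := by
      have h := (hsqrt.div (hasDerivAt_id y) hy0.ne').neg
      refine h.congr_deriv ?_; symm
      simp only [id, ← hsdef]
      rw [show b * (y - b) + r ^ 2 = (y - b) * y + s ^ 2 by rw [hs2]; ring]
      field_simp
      ring
    -- term 2
    have hxne1 : (y - b) / r ≠ -1 := by
      intro h
      have : y - b = -1 * r := (div_eq_iff hr.ne').1 h
      linarith
    have hxne2 : (y - b) / r ≠ 1 := by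
      intro h
      have : y - b = 1 * r := (div_eq_iff hr.ne').1 h
      linarith
    have hinner2 : HasDerivAt (fun t : ℝ => (t - b) / r) (1 / r) y := by
      simpa using ((hasDerivAt_id y).sub_const b).div_const r
    have e1 : Real.sqrt (1 - ((y - b) / r) ^ 2) = s / r := by
      have h' : (s / r) ^ 2 = 1 - ((y - b) / r) ^ 2 := by
        rw [div_pow, hs2, div_pow]; field_simp
      rw [← h', Real.sqrt_sq (by positivity)]
    have h2 : HasDerivAt (fun t : ℝ => Real.arcsin ((t - b) / r)) (1 / s) y := by
      have h := (Real.hasDerivAt_arcsin hxne1 hxne2).comp y hinner2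
      refine h.congr_deriv ?_; symm
      rw [e1]
      field_simp
    -- term 3
    set q : ℝ := (b * (y - b) + r ^ 2) / (r * y) with hq
    have hq2 : 1 - q ^ 2 = (b ^ 2 - r ^ 2) * (r ^ 2 - (y - b) ^ 2) / (r * y) ^ 2 := by
      rw [hq]
      field_simp
      ring
    have hq2pos : 0 < 1 - q ^ 2 := by
      rw [hq2]; positivity
    have hqne1 : q ≠ -1 := by intro h; rw [h] at hq2pos; norm_num at hq2pos
    have hqne2 : q ≠ 1 := by intro h; rw [h] at hq2pos; norm_num at hq2pos
    have hinner3 : HasDerivAt (fun t : ℝ => (b * (t - b) + r ^ 2) / (r * t))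
        ((b * (r * y) - (b * (y - b) + r ^ 2) * r) / (r * y) ^ 2) y := by
      have hnum : HasDerivAt (fun t : ℝ => b * (t - b) + r ^ 2) b y := by
        simpa using (((hasDerivAt_id y).sub_const b).const_mul b).add_const (r ^ 2)
      have hden : HasDerivAt (fun t : ℝ => r * t) r y := by
        simpa using (hasDerivAt_id y).const_mul r
      have h := hnum.div hden (by positivity)
      exact h
    have e2 : Real.sqrt (1 - q ^ 2) = Real.sqrt (b ^ 2 - r ^ 2) * s / (r * y) := by
      have h' : (Real.sqrt (b ^ 2 - r ^ 2) * s / (r * y)) ^ 2 = 1 - q ^ 2 := by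
        rw [hq2, div_pow, mul_pow, hsd2, hs2]
      rw [← h', Real.sqrt_sq (by positivity)]
    have h3 : HasDerivAt (fun t : ℝ => c * Real.arcsin ((b * (t - b) + r ^ 2) / (r * t)))
        (b / (s * y)) y := by
      have h := ((Real.hasDerivAt_arcsin hqne1 hqne2).comp y hinner3).const_mul c
      refine h.congr_deriv ?_; symm
      rw [e2, hc]
      rw [show b * (r * y) - (b * (y - b) + r ^ 2) * r = r * (b ^ 2 - r ^ 2) by ring]
      field_simp
      linear_combination b * hsd2
    -- combine
    have H := ((h1.sub h2).add h3).const_mul 2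
    have heq : 2 * ((b * (y - b) + r ^ 2) / (s * y ^ 2) - 1 / s + b / (s * y))
        = 2 * s / y ^ 2 := by
      rw [show b * (y - b) + r ^ 2 = s ^ 2 + (y - b) * y by rw [hs2]; ring]
      field_simp
      ring
    rw [← heq]
    exact H
  have hynz : ∀ y ∈ Set.Icc (b - r) (b + r), y ≠ 0 := by
    intro y hy
    have : 0 < y := lt_of_lt_of_le hbr0 hy.1
    exact this.ne'
  have c1 : Continuous fun y : ℝ => Real.sqrt (r ^ 2 - (y - b) ^ 2) :=
    Real.continuous_sqrt.comp (by fun_prop)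
  have c2 : Continuous fun y : ℝ => Real.arcsin ((y - b) / r) :=
    Real.continuous_arcsin.comp (by fun_prop)
  have hcont : ContinuousOn G (Set.Icc (b - r) (b + r)) := by
    apply ContinuousOn.mul continuousOn_const
    apply ContinuousOn.add
    · exact ((c1.continuousOn.div continuousOn_id hynz).neg).sub c2.continuousOn
    · apply ContinuousOn.mul continuousOn_const
      apply Real.continuous_arcsin.comp_continuousOn
      apply ContinuousOn.div
        (by fun_prop : Continuous fun y : ℝ => b * (y - b) + r ^ 2).continuousOn
        (by fun_prop : Continuous fun y : ℝ => r * y).continuousOn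
      intro y hy
      exact mul_ne_zero hr.ne' (hynz y hy)
  have hint : IntervalIntegrable (fun y => 2 * Real.sqrt (r ^ 2 - (y - b) ^ 2) / y ^ 2)
      volume (b - r) (b + r) := by
    apply ContinuousOn.intervalIntegrable
    rw [Set.uIcc_of_le (by linarith)]
    apply ContinuousOn.div
    · exact (continuous_const.mul c1).continuousOn
    · exact (continuous_pow 2).continuousOn
    · intro y hy
      exact pow_ne_zero 2 (hynz y hy)
  rw [intervalIntegral.integral_eq_sub_of_hasDeriv_right_of_le (by linarith) hcont
    (fun y hy => (hderiv y hy).hasDerivWithinAt) hint]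
  rw [hG]
  simp only
  rw [show r ^ 2 - (b + r - b) ^ 2 = 0 by ring, show r ^ 2 - (b - r - b) ^ 2 = 0 by ring,
    Real.sqrt_zero]
  rw [show (b + r - b) / r = 1 by field_simp; ring, show (b - r - b) / r = -1 by field_simp; ring]
  rw [show (b * (b + r - b) + r ^ 2) / (r * (b + r)) = 1 by
    rw [div_eq_one_iff_eq (ne_of_gt (by nlinarith : (0:ℝ) < r * (b + r)))]; ring]
  rw [show (b * (b - r - b) + r ^ 2) / (r * (b - r)) = -1 by
    rw [div_eq_iff (ne_of_gt (by nlinarith : (0:ℝ) < r * (b - r)))]; ring]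
  rw [Real.arcsin_one, Real.arcsin_neg_one]
  rw [hc]
  ring

theorem hyperbolic_area_euclidean_disk (b r : ℝ) (hr : 0 < r) (hbr : r < b) :
    (∫ p in {p : ℝ × ℝ | p.1 ^ 2 + (p.2 - b) ^ 2 ≤ r ^ 2}, 1 / p.2 ^ 2) =
      2 * π * ((b / r) / Real.sqrt ((b / r) ^ 2 - 1) - 1) := by
  have hd : 0 < b ^ 2 - r ^ 2 := by nlinarith
  set D : Set (ℝ × ℝ) := {p : ℝ × ℝ | p.1 ^ 2 + (p.2 - b) ^ 2 ≤ r ^ 2} with hD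
  have hDclosed : IsClosed D :=
    isClosed_le (by fun_prop) continuous_const
  have hDmeas : MeasurableSet D := hDclosed.measurableSet
  have hDsub : D ⊆ Set.Icc (-r) r ×ˢ Set.Icc (b - r) (b + r) := by
    rintro ⟨x, y⟩ hp
    simp only [hD, Set.mem_setOf_eq] at hp
    constructor
    · constructor <;> nlinarith [sq_nonneg (y - b), sq_nonneg (x + r), sq_nonneg (x - r)]
    · constructor <;> nlinarith [sq_nonneg x, sq_nonneg (y - b + r), sq_nonneg (y - b - r)]
  have hDcompact : IsCompact D :=
    (isCompact_Icc.prod isCompact_Icc).of_isClosed_subset hDclosed hDsub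
  have hpos : ∀ p ∈ D, (0 : ℝ) < p.2 := by
    rintro ⟨x, y⟩ hp
    simp only [hD, Set.mem_setOf_eq] at hp
    nlinarith [sq_nonneg x, sq_nonneg (y - b + r)]
  have hContOn : ContinuousOn (fun p : ℝ × ℝ => 1 / p.2 ^ 2) D := by
    apply ContinuousOn.div continuousOn_const
      ((continuous_pow 2).comp continuous_snd).continuousOn
    intro p hp
    exact pow_ne_zero 2 (hpos p hp).ne'
  have hIntOn : IntegrableOn (fun p : ℝ × ℝ => 1 / p.2 ^ 2) D :=
    hContOn.integrableOn_compact hDcompact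
  have hIndInt : Integrable (D.indicator fun p : ℝ × ℝ => 1 / p.2 ^ 2)
      (volume.prod volume) :=
    (integrable_indicator_iff hDmeas).2 hIntOn
  have hslice_meas : ∀ y : ℝ, MeasurableSet {x : ℝ | x ^ 2 + (y - b) ^ 2 ≤ r ^ 2} := by
    intro y
    exact (isClosed_le (by fun_prop) continuous_const).measurableSet
  have key : ∀ y : ℝ, (∫ x in {x : ℝ | x ^ 2 + (y - b) ^ 2 ≤ r ^ 2}, (1 / y ^ 2))
      = 2 * Real.sqrt (r ^ 2 - (y - b) ^ 2) / y ^ 2 := by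
    intro y
    rcases le_or_gt 0 (r ^ 2 - (y - b) ^ 2) with h | h
    · set g : ℝ := Real.sqrt (r ^ 2 - (y - b) ^ 2) with hg
      have hg0 : 0 ≤ g := Real.sqrt_nonneg _
      have hg2 : g ^ 2 = r ^ 2 - (y - b) ^ 2 := Real.sq_sqrt h
      have hset : {x : ℝ | x ^ 2 + (y - b) ^ 2 ≤ r ^ 2} = Set.Icc (-g) g := by
        ext x
        simp only [Set.mem_setOf_eq, Set.mem_Icc]
        constructor
        · intro hx
          have hx2 : x ^ 2 ≤ g ^ 2 := by rw [hg2]; linarith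
          constructor <;> nlinarith [sq_nonneg (x + g), sq_nonneg (x - g)]
        · intro ⟨h1, h2⟩
          nlinarith [sq_nonneg (x + g), sq_nonneg (x - g)]
      rw [hset, MeasureTheory.setIntegral_const, measureReal_def, Real.volume_Icc,
        ENNReal.toReal_ofReal (by linarith), smul_eq_mul]
      ring
    · have hset : {x : ℝ | x ^ 2 + (y - b) ^ 2 ≤ r ^ 2} = (∅ : Set ℝ) := by
        ext x
        simp only [Set.mem_setOf_eq, Set.mem_empty_iff_false, iff_false, not_le]
        nlinarith [sq_nonneg x]
      rw [hset, Real.sqrt_eq_zero_of_nonpos h.le]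
      simp
  calc (∫ p in D, 1 / p.2 ^ 2)
      = ∫ p : ℝ × ℝ, D.indicator (fun p : ℝ × ℝ => 1 / p.2 ^ 2) p := by
        rw [integral_indicator hDmeas]
    _ = ∫ p : ℝ × ℝ, D.indicator (fun p : ℝ × ℝ => 1 / p.2 ^ 2) p
          ∂(volume.prod volume) := rfl
    _ = ∫ y : ℝ, ∫ x : ℝ, D.indicator (fun p : ℝ × ℝ => 1 / p.2 ^ 2) (x, y) := by
        rw [MeasureTheory.integral_prod_symm _ hIndInt]
    _ = ∫ y : ℝ, 2 * Real.sqrt (r ^ 2 - (y - b) ^ 2) / y ^ 2 := by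
        congr 1
        ext y
        have hind : ∀ x : ℝ, D.indicator (fun p : ℝ × ℝ => 1 / p.2 ^ 2) (x, y)
            = ({x : ℝ | x ^ 2 + (y - b) ^ 2 ≤ r ^ 2}).indicator
                (fun _ : ℝ => 1 / y ^ 2) x := by
          intro x
          simp only [Set.indicator, hD, Set.mem_setOf_eq]
        rw [show (fun x : ℝ => D.indicator (fun p : ℝ × ℝ => 1 / p.2 ^ 2) (x, y))
            = ({x : ℝ | x ^ 2 + (y - b) ^ 2 ≤ r ^ 2}).indicator
                (fun _ : ℝ => 1 / y ^ 2) from funext hind]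
        rw [integral_indicator (hslice_meas y)]
        exact key y
    _ = ∫ y in Set.Icc (b - r) (b + r), 2 * Real.sqrt (r ^ 2 - (y - b) ^ 2) / y ^ 2 := by
        apply (setIntegral_eq_integral_of_forall_compl_eq_zero _).symm
        intro y hy
        simp only [Set.mem_Icc, not_and_or, not_le] at hy
        have : r ^ 2 - (y - b) ^ 2 < 0 := by
          rcases hy with h | h <;> nlinarith
        rw [Real.sqrt_eq_zero_of_nonpos this.le]
        simp
    _ = ∫ y in (b - r)..(b + r), 2 * Real.sqrt (r ^ 2 - (y - b) ^ 2) / y ^ 2 := by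
        rw [MeasureTheory.integral_Icc_eq_integral_Ioc,
          intervalIntegral.integral_of_le (by linarith)]
    _ = 2 * π * (b / Real.sqrt (b ^ 2 - r ^ 2) - 1) := oneD_integral b r hr hbr
    _ = 2 * π * ((b / r) / Real.sqrt ((b / r) ^ 2 - 1) - 1) := by
        have hsd : 0 < Real.sqrt (b ^ 2 - r ^ 2) := Real.sqrt_pos.2 hd
        have hsd2 : Real.sqrt (b ^ 2 - r ^ 2) ^ 2 = b ^ 2 - r ^ 2 := Real.sq_sqrt hd.le
        have e : Real.sqrt ((b / r) ^ 2 - 1) = Real.sqrt (b ^ 2 - r ^ 2) / r := by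
          rw [show (b / r) ^ 2 - 1 = (Real.sqrt (b ^ 2 - r ^ 2) / r) ^ 2 by
            rw [div_pow, div_pow, hsd2]; field_simp, Real.sqrt_sq (by positivity)]
        rw [e, show b / r / (Real.sqrt (b ^ 2 - r ^ 2) / r) = b / Real.sqrt (b ^ 2 - r ^ 2) by
          rw [div_div_div_comm, div_self hr.ne', div_one]]
end
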